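/- For every H with 0 < H ≤ 1, the fractional Brownian motion covariance kernel K_H(s,t) := (1/2)(s^(2H) + t^(2H) − |s−t|^(2H)) is positive semidefinite on [0,∞): for every n ∈ ℕ, every t : Fin n → ℝ with t_i ≥ 0 for all i, and every c : Fin n → ℝ, one has ∑_{i,j} c_i · c_j · K_H(t_i, t_j) ≥ 0. -/

import Mathlib

open MeasureTheory Real Set Nat intervalIntegral
open scoped ENNReal


lemma fbm_exp_tsum (y : ℝ) : Real.exp y = ∑' k : ℕ, y ^ k / k ! := by
  rw [Real.exp_eq_exp_ℝ, NormedSpace.exp_eq_tsum_div]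

/-- The Gaussian kernel is positive semidefinite. -/
lemma fbm_gaussPSD {ι : Type*} [Fintype ι] {l : ℝ} (hl : 0 ≤ l) (s d : ι → ℝ) :
    0 ≤ ∑ i, ∑ j, d i * d j * Real.exp (-((s i - s j) ^ 2 * l)) := by
  have hsum : ∀ A y : ℝ, Summable (fun k : ℕ => A * (y ^ k / k !)) :=
    fun A y => (Real.summable_pow_div_factorial y).mul_left A
  set e : ι → ℝ := fun i => d i * Real.exp (-(s i ^ 2 * l)) with he
  have key : ∀ i j : ι, d i * d j * Real.exp (-((s i - s j) ^ 2 * l))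
      = ∑' k : ℕ, e i * e j * ((2 * l * s i * s j) ^ k / k !) := by
    intro i j
    rw [tsum_mul_left, ← fbm_exp_tsum]
    have harg : -((s i - s j) ^ 2 * l)
        = -(s i ^ 2 * l) + (-(s j ^ 2 * l) + 2 * l * s i * s j) := by ring
    rw [harg, Real.exp_add, Real.exp_add, he]
    ring
  have main : ∑ i, ∑ j, d i * d j * Real.exp (-((s i - s j) ^ 2 * l))
      = ∑' k : ℕ, (2 * l) ^ k / k ! * (∑ i, e i * s i ^ k) ^ 2 := by
    calc ∑ i, ∑ j, d i * d j * Real.exp (-((s i - s j) ^ 2 * l))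
        = ∑ p : ι × ι, d p.1 * d p.2 * Real.exp (-((s p.1 - s p.2) ^ 2 * l)) :=
          (Fintype.sum_prod_type' _).symm
      _ = ∑ p : ι × ι, ∑' k : ℕ, e p.1 * e p.2 * ((2 * l * s p.1 * s p.2) ^ k / k !) :=
          Finset.sum_congr rfl fun p _ => key p.1 p.2
      _ = ∑' k : ℕ, ∑ p : ι × ι, e p.1 * e p.2 * ((2 * l * s p.1 * s p.2) ^ k / k !) :=
          (Summable.tsum_finsetSum fun p _ => hsum _ _).symm
      _ = ∑' k : ℕ, (2 * l) ^ k / k ! * (∑ i, e i * s i ^ k) ^ 2 := by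
          refine tsum_congr fun k => ?_
          rw [Fintype.sum_prod_type, sq, Finset.sum_mul_sum, Finset.mul_sum]
          refine Finset.sum_congr rfl fun i _ => ?_
          rw [Finset.mul_sum]
          refine Finset.sum_congr rfl fun j _ => ?_
          dsimp only
          ring
  rw [main]
  refine tsum_nonneg fun k => ?_
  have h2l : (0:ℝ) ≤ (2 * l) ^ k := pow_nonneg (by linarith) k
  positivity

/-- PSD of the kernel of the Gaussian kernel process pinned at `0`. -/
lemma fbm_centeredPSD {n : ℕ} {l : ℝ} (hl : 0 ≤ l) (t c : Fin n → ℝ) :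
    0 ≤ ∑ i, ∑ j, c i * c j *
      (Real.exp (-((t i - t j) ^ 2 * l)) - Real.exp (-(t i ^ 2 * l))
        - Real.exp (-(t j ^ 2 * l)) + 1) := by
  set S := ∑ i, c i with hS
  set E := ∑ i, c i * Real.exp (-(t i ^ 2 * l)) with hE
  set D := ∑ i, ∑ j, c i * c j * Real.exp (-((t i - t j) ^ 2 * l)) with hD
  clear_value S E D
  have h := fbm_gaussPSD hl (fun o : Option (Fin n) => o.elim 0 t)
    (fun o : Option (Fin n) => o.elim (-S) c)
  simp only [Fintype.sum_option, Option.elim] at h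
  have h1 : ∀ j : Fin n, ((0:ℝ) - t j) ^ 2 = t j ^ 2 := fun j => by ring
  have h2 : ∀ i : Fin n, (t i - 0) ^ 2 = t i ^ 2 := fun i => by ring
  simp only [h1, h2, sub_self, ne_eq, OfNat.ofNat_ne_zero, not_false_eq_true,
    zero_pow, zero_mul, neg_zero, Real.exp_zero, mul_one] at h
  rw [Finset.sum_add_distrib] at h
  have e1 : ∑ x, -S * c x * Real.exp (-(t x ^ 2 * l)) = -(S * E) := by
    rw [Finset.sum_congr rfl fun (x : Fin n) _ =>
      (show -S * c x * Real.exp (-(t x ^ 2 * l))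
        = -(S * (c x * Real.exp (-(t x ^ 2 * l)))) by ring),
      Finset.sum_neg_distrib, ← Finset.mul_sum, ← hE]
  have e2 : ∑ x, c x * -S * Real.exp (-(t x ^ 2 * l)) = -(S * E) := by
    rw [Finset.sum_congr rfl fun (x : Fin n) _ =>
      (show c x * -S * Real.exp (-(t x ^ 2 * l))
        = -(S * (c x * Real.exp (-(t x ^ 2 * l)))) by ring),
      Finset.sum_neg_distrib, ← Finset.mul_sum, ← hE]
  rw [e1, e2, ← hD] at h
  have hgoal : ∑ i, ∑ j, c i * c j *
      (Real.exp (-((t i - t j) ^ 2 * l)) - Real.exp (-(t i ^ 2 * l))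
        - Real.exp (-(t j ^ 2 * l)) + 1)
      = D - E * S - S * E + S * S := by
    calc ∑ i, ∑ j, c i * c j *
        (Real.exp (-((t i - t j) ^ 2 * l)) - Real.exp (-(t i ^ 2 * l))
          - Real.exp (-(t j ^ 2 * l)) + 1)
        = ∑ i, ((∑ j, c i * c j * Real.exp (-((t i - t j) ^ 2 * l)))
            - (c i * Real.exp (-(t i ^ 2 * l))) * S - c i * E + c i * S) := by
          refine Finset.sum_congr rfl fun i _ => ?_
          rw [hS, hE, Finset.mul_sum, Finset.mul_sum, Finset.mul_sum,
            ← Finset.sum_sub_distrib, ← Finset.sum_sub_distrib, ← Finset.sum_add_distrib]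
          refine Finset.sum_congr rfl fun j _ => by ring
      _ = D - E * S - S * E + S * S := by
          rw [hD, hE, hS, Finset.sum_mul, Finset.sum_mul, Finset.sum_mul,
            ← Finset.sum_sub_distrib, ← Finset.sum_sub_distrib, ← Finset.sum_add_distrib]
          try refine Finset.sum_congr rfl fun i _ => by ring
  rw [hgoal]
  ring_nf
  ring_nf at h
  linarith


lemma fbm_cont {H : ℝ} {x : ℝ} (hx : 0 ≤ x) :
    ContinuousOn (fun u : ℝ => (1 - Real.exp (-(x * u))) * u ^ (-1 - H)) (Ioi (0:ℝ)) := by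
  refine ContinuousOn.mul ?_ ?_
  · exact (continuous_const.sub
      (Real.continuous_exp.comp ((continuous_const.mul continuous_id).neg))).continuousOn
  · intro u hu
    exact (Real.continuousAt_rpow_const u _ (Or.inl (ne_of_gt hu))).continuousWithinAt

lemma fbm_integrable_base {H : ℝ} (h0 : 0 < H) (h1 : H < 1) :
    IntegrableOn (fun u : ℝ => (1 - Real.exp (-u)) * u ^ (-1 - H)) (Ioi (0:ℝ)) := by
  have hcont : ContinuousOn (fun u : ℝ => (1 - Real.exp (-u)) * u ^ (-1 - H)) (Ioi (0:ℝ)) := by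
    have := fbm_cont (H := H) (x := 1) zero_le_one
    simpa using this
  have h01 : IntegrableOn (fun u : ℝ => (1 - Real.exp (-u)) * u ^ (-1 - H)) (Ioc (0:ℝ) 1) := by
    have hg : IntegrableOn (fun u : ℝ => u ^ (-H)) (Ioc (0:ℝ) 1) := by
      rw [integrableOn_Ioc_iff_integrableOn_Ioo]
      exact (integrableOn_Ioo_rpow_iff zero_lt_one).mpr (by linarith)
    refine Integrable.mono' hg
      ((hcont.mono Ioc_subset_Ioi_self).aestronglyMeasurable measurableSet_Ioc) ?_
    rw [ae_restrict_iff' measurableSet_Ioc]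
    refine ae_of_all _ fun u hu => ?_
    have hu0 : 0 < u := hu.1
    have he1 : Real.exp (-u) ≤ 1 := Real.exp_le_one_iff.mpr (by linarith)
    have h1e : 1 - Real.exp (-u) ≤ u := by nlinarith [Real.add_one_le_exp (-u)]
    have h0e : 0 ≤ 1 - Real.exp (-u) := by linarith
    rw [Real.norm_eq_abs, abs_of_nonneg (mul_nonneg h0e (Real.rpow_nonneg hu0.le _))]
    calc (1 - Real.exp (-u)) * u ^ (-1 - H) ≤ u * u ^ (-1 - H) :=
          mul_le_mul_of_nonneg_right h1e (Real.rpow_nonneg hu0.le _)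
      _ = u ^ (-H) := by
          rw [show (-H) = 1 + (-1 - H) by ring, Real.rpow_add hu0, Real.rpow_one]
  have h1' : IntegrableOn (fun u : ℝ => (1 - Real.exp (-u)) * u ^ (-1 - H)) (Ioi (1:ℝ)) := by
    refine Integrable.mono' (integrableOn_Ioi_rpow_of_lt (show (-1-H) < -1 by linarith) zero_lt_one)
      ((hcont.mono (Ioi_subset_Ioi zero_le_one)).aestronglyMeasurable measurableSet_Ioi) ?_
    rw [ae_restrict_iff' measurableSet_Ioi]
    refine ae_of_all _ fun u hu => ?_
    have hu0 : (0:ℝ) < u := lt_trans zero_lt_one hu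
    have he1 : Real.exp (-u) ≤ 1 := Real.exp_le_one_iff.mpr (by linarith)
    have h0e : 0 ≤ 1 - Real.exp (-u) := by linarith
    have h1e : 1 - Real.exp (-u) ≤ 1 := by linarith [Real.exp_pos (-u)]
    rw [Real.norm_eq_abs, abs_of_nonneg (mul_nonneg h0e (Real.rpow_nonneg hu0.le _))]
    calc (1 - Real.exp (-u)) * u ^ (-1 - H) ≤ 1 * u ^ (-1 - H) :=
          mul_le_mul_of_nonneg_right h1e (Real.rpow_nonneg hu0.le _)
      _ = u ^ (-1 - H) := one_mul _
  have := h01.union h1'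
  rwa [Ioc_union_Ioi_eq_Ioi zero_le_one] at this

lemma fbm_Ipos {H : ℝ} (h0 : 0 < H) (h1 : H < 1) :
    0 < ∫ u in Ioi (0:ℝ), (1 - Real.exp (-u)) * u ^ (-1 - H) := by
  have hnn : 0 ≤ᵐ[volume.restrict (Ioi (0:ℝ))]
      fun u : ℝ => (1 - Real.exp (-u)) * u ^ (-1 - H) := by
    refine (ae_restrict_iff' measurableSet_Ioi).mpr (ae_of_all _ fun u hu => ?_)
    have he1 : Real.exp (-u) ≤ 1 := Real.exp_le_one_iff.mpr (by simp at hu ⊢; linarith)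
    exact mul_nonneg (by linarith) (Real.rpow_nonneg (le_of_lt hu) _)
  rw [setIntegral_pos_iff_support_of_nonneg_ae hnn (fbm_integrable_base h0 h1)]
  have hsub : Ioi (0:ℝ) ⊆ Function.support (fun u : ℝ => (1 - Real.exp (-u)) * u ^ (-1 - H))
      ∩ Ioi 0 := by
    intro u hu
    have hu0 : (0:ℝ) < u := hu
    have he1 : Real.exp (-u) < 1 := by
      rw [Real.exp_lt_one_iff]; linarith
    refine ⟨?_, hu⟩
    have : 0 < (1 - Real.exp (-u)) * u ^ (-1 - H) :=
      mul_pos (by linarith) (Real.rpow_pos_of_pos hu0 _)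
    exact ne_of_gt this
  calc (0:ℝ≥0∞) < volume (Ioi (0:ℝ)) := by simp [Real.volume_Ioi]
    _ ≤ _ := measure_mono hsub



lemma fbm_repr {H : ℝ} (h0 : 0 < H) (h1 : H < 1) {x : ℝ} (hx : 0 ≤ x) :
    ∫ u in Ioi (0:ℝ), (1 - Real.exp (-(x * u))) * u ^ (-1 - H)
      = x ^ H * ∫ u in Ioi (0:ℝ), (1 - Real.exp (-u)) * u ^ (-1 - H) := by
  rcases eq_or_lt_of_le hx with hx0 | hx0
  · rw [← hx0]
    simp [Real.zero_rpow (ne_of_gt h0)]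
  set I := ∫ u in Ioi (0:ℝ), (1 - Real.exp (-u)) * u ^ (-1 - H) with hI
  have hsub := integral_comp_mul_left_Ioi
    (fun u : ℝ => (1 - Real.exp (-u)) * u ^ (-1 - H)) 0 hx0
  rw [mul_zero] at hsub
  -- hsub : ∫ u in Ioi 0, (1 - exp (-(x * u))) * (x * u) ^ (-1 - H) = x⁻¹ • I
  have hcongr : ∫ u in Ioi (0:ℝ), (1 - Real.exp (-(x * u))) * (x * u) ^ (-1 - H)
      = x ^ (-1 - H) * ∫ u in Ioi (0:ℝ), (1 - Real.exp (-(x * u))) * u ^ (-1 - H) := by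
    rw [← MeasureTheory.integral_const_mul]
    refine setIntegral_congr_fun measurableSet_Ioi fun u hu => ?_
    rw [Real.mul_rpow hx0.le (le_of_lt hu)]
    ring
  rw [hcongr, smul_eq_mul] at hsub
  set A := ∫ u in Ioi (0:ℝ), (1 - Real.exp (-(x * u))) * u ^ (-1 - H) with hA
  have e1 : x ^ (1 + H) * x ^ (-1 - H) = 1 := by
    rw [← Real.rpow_add hx0]
    norm_num
  have e2 : x ^ (1 + H) * x⁻¹ = x ^ H := by
    rw [← Real.rpow_neg_one x, ← Real.rpow_add hx0]
    norm_num
  calc A = (x ^ (1 + H) * x ^ (-1 - H)) * A := by rw [e1, one_mul]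
    _ = x ^ (1 + H) * (x ^ (-1 - H) * A) := by ring
    _ = x ^ (1 + H) * (x⁻¹ * I) := by rw [hsub]
    _ = (x ^ (1 + H) * x⁻¹) * I := by ring
    _ = x ^ H * I := by rw [e2]

lemma fbm_integrable_scaled {H : ℝ} (h0 : 0 < H) (h1 : H < 1) {x : ℝ} (hx : 0 ≤ x) :
    IntegrableOn (fun u : ℝ => (1 - Real.exp (-(x * u))) * u ^ (-1 - H)) (Ioi (0:ℝ)) := by
  rcases eq_or_lt_of_le hx with hx0 | hx0
  · have : (fun u : ℝ => (1 - Real.exp (-(x * u))) * u ^ (-1 - H)) = fun _ => (0:ℝ) := by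
      funext u; rw [← hx0]; simp
    rw [this]
    exact integrableOn_zero
  have hbase := fbm_integrable_base (H := H) h0 h1
  have hcomp : IntegrableOn
      (fun u : ℝ => (1 - Real.exp (-(x * u))) * (x * u) ^ (-1 - H)) (Ioi (0:ℝ)) := by
    have := (integrableOn_Ioi_comp_mul_left_iff
      (fun u : ℝ => (1 - Real.exp (-u)) * u ^ (-1 - H)) 0 hx0).mpr
    rw [mul_zero] at this
    exact this hbase
  have hc2 : IntegrableOn
      (fun u : ℝ => x ^ (1 + H) * ((1 - Real.exp (-(x * u))) * (x * u) ^ (-1 - H)))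
      (Ioi (0:ℝ)) := hcomp.const_mul (x ^ (1 + H))
  refine IntegrableOn.congr_fun hc2 (fun u hu => ?_) measurableSet_Ioi
  rw [Real.mul_rpow hx0.le (le_of_lt hu)]
  have e1 : x ^ (1 + H) * x ^ (-1 - H) = 1 := by
    rw [← Real.rpow_add hx0]; norm_num
  calc x ^ (1 + H) * ((1 - Real.exp (-(x * u))) * (x ^ (-1 - H) * u ^ (-1 - H)))
      = (x ^ (1 + H) * x ^ (-1 - H)) * ((1 - Real.exp (-(x * u))) * u ^ (-1 - H)) := by ring
    _ = (1 - Real.exp (-(x * u))) * u ^ (-1 - H) := by rw [e1, one_mul]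







/-- The fractional Brownian motion covariance kernel
`K_H(s,t) = (1/2)(s^(2H) + t^(2H) − |s−t|^(2H))` is positive semidefinite on `[0,∞)`
for `0 < H ≤ 1`. -/
theorem stmt_12 (H : ℝ) (h0 : 0 < H) (h1 : H ≤ 1) (n : ℕ) (t : Fin n → ℝ)
    (ht : ∀ i, 0 ≤ t i) (c : Fin n → ℝ) :
    0 ≤ ∑ i, ∑ j, c i * c j *
      ((1/2) * ((t i) ^ (2*H) + (t j) ^ (2*H) - |t i - t j| ^ (2*H))) := by
  have hr : ∀ x : ℝ, 0 ≤ x → x ^ (2*H) = (x^2) ^ H := fun x hx => by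
    rw [Real.rpow_mul hx, Real.rpow_two]
  rcases eq_or_lt_of_le h1 with hH1 | hH1
  · -- H = 1
    subst hH1
    have key : ∀ i j : Fin n, c i * c j *
        ((1/2) * ((t i) ^ (2*(1:ℝ)) + (t j) ^ (2*(1:ℝ)) - |t i - t j| ^ (2*(1:ℝ))))
        = (c i * t i) * (c j * t j) := by
      intro i j
      rw [show (2*(1:ℝ)) = (2:ℝ) by norm_num, Real.rpow_two, Real.rpow_two, Real.rpow_two,
        sq_abs]
      ring
    calc (0:ℝ) ≤ (∑ i, c i * t i) * (∑ j, c j * t j) := mul_self_nonneg _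
      _ = ∑ i, ∑ j, (c i * t i) * (c j * t j) := by rw [Finset.sum_mul_sum]
      _ = ∑ i, ∑ j, c i * c j *
          ((1/2) * ((t i) ^ (2*(1:ℝ)) + (t j) ^ (2*(1:ℝ)) - |t i - t j| ^ (2*(1:ℝ)))) :=
        Finset.sum_congr rfl fun i _ => Finset.sum_congr rfl fun j _ => (key i j).symm
  · -- H < 1
    set I := ∫ u in Ioi (0:ℝ), (1 - Real.exp (-u)) * u ^ (-1 - H) with hIdef
    have hIpos : 0 < I := fbm_Ipos h0 hH1
    set T := ∑ p : Fin n × Fin n, c p.1 * c p.2 *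
      ((t p.1 ^ 2) ^ H + (t p.2 ^ 2) ^ H - ((t p.1 - t p.2) ^ 2) ^ H) with hT
    clear_value I
    -- the integrand family
    have hint : ∀ p : Fin n × Fin n, IntegrableOn (fun u : ℝ =>
        c p.1 * c p.2 * ((1 - Real.exp (-(t p.1 ^ 2 * u))) * u ^ (-1 - H)
          + (1 - Real.exp (-(t p.2 ^ 2 * u))) * u ^ (-1 - H)
          - (1 - Real.exp (-((t p.1 - t p.2) ^ 2 * u))) * u ^ (-1 - H))) (Ioi (0:ℝ)) := by
      intro p
      exact (((fbm_integrable_scaled h0 hH1 (sq_nonneg (t p.1))).add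
        (fbm_integrable_scaled h0 hH1 (sq_nonneg (t p.2)))).sub
        (fbm_integrable_scaled h0 hH1 (sq_nonneg (t p.1 - t p.2)))).const_mul _
    have hval : ∀ p : Fin n × Fin n, (∫ u in Ioi (0:ℝ),
        c p.1 * c p.2 * ((1 - Real.exp (-(t p.1 ^ 2 * u))) * u ^ (-1 - H)
          + (1 - Real.exp (-(t p.2 ^ 2 * u))) * u ^ (-1 - H)
          - (1 - Real.exp (-((t p.1 - t p.2) ^ 2 * u))) * u ^ (-1 - H)))
        = c p.1 * c p.2 *
          ((t p.1 ^ 2) ^ H + (t p.2 ^ 2) ^ H - ((t p.1 - t p.2) ^ 2) ^ H) * I := by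
      intro p
      rw [MeasureTheory.integral_const_mul, MeasureTheory.integral_sub, MeasureTheory.integral_add, fbm_repr h0 hH1 (sq_nonneg (t p.1)),
        fbm_repr h0 hH1 (sq_nonneg (t p.2)), fbm_repr h0 hH1 (sq_nonneg (t p.1 - t p.2))]
      · rw [← hIdef]; ring
      · exact fbm_integrable_scaled h0 hH1 (sq_nonneg (t p.1))
      · exact fbm_integrable_scaled h0 hH1 (sq_nonneg (t p.2))
      · exact (fbm_integrable_scaled h0 hH1 (sq_nonneg (t p.1))).add
          (fbm_integrable_scaled h0 hH1 (sq_nonneg (t p.2)))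
      · exact fbm_integrable_scaled h0 hH1 (sq_nonneg (t p.1 - t p.2))
    have hTI : 0 ≤ T * I := by
      have hTI1 : T * I = ∫ u in Ioi (0:ℝ), ∑ p : Fin n × Fin n,
          c p.1 * c p.2 * ((1 - Real.exp (-(t p.1 ^ 2 * u))) * u ^ (-1 - H)
            + (1 - Real.exp (-(t p.2 ^ 2 * u))) * u ^ (-1 - H)
            - (1 - Real.exp (-((t p.1 - t p.2) ^ 2 * u))) * u ^ (-1 - H)) := by
        rw [MeasureTheory.integral_finset_sum Finset.univ (fun p _ => hint p), hT, Finset.sum_mul]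
        exact Finset.sum_congr rfl fun p _ => (hval p).symm
      rw [hTI1]
      refine setIntegral_nonneg measurableSet_Ioi fun u hu => ?_
      have hu0 : (0:ℝ) < u := hu
      have hpw : ∑ p : Fin n × Fin n,
          c p.1 * c p.2 * ((1 - Real.exp (-(t p.1 ^ 2 * u))) * u ^ (-1 - H)
            + (1 - Real.exp (-(t p.2 ^ 2 * u))) * u ^ (-1 - H)
            - (1 - Real.exp (-((t p.1 - t p.2) ^ 2 * u))) * u ^ (-1 - H))
          = u ^ (-1 - H) * ∑ i, ∑ j, c i * c j *
            (Real.exp (-((t i - t j) ^ 2 * u)) - Real.exp (-(t i ^ 2 * u))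
              - Real.exp (-(t j ^ 2 * u)) + 1) := by
        rw [Fintype.sum_prod_type, Finset.mul_sum]
        refine Finset.sum_congr rfl fun i _ => ?_
        rw [Finset.mul_sum]
        refine Finset.sum_congr rfl fun j _ => by ring
      rw [hpw]
      exact mul_nonneg (Real.rpow_nonneg hu0.le _) (fbm_centeredPSD hu0.le t c)
    have hTnn : 0 ≤ T := by nlinarith
    have hgoal : ∑ i, ∑ j, c i * c j *
        ((1/2) * ((t i) ^ (2*H) + (t j) ^ (2*H) - |t i - t j| ^ (2*H)))
        = (1/2) * T := by
      rw [hT, Fintype.sum_prod_type, Finset.mul_sum]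
      refine Finset.sum_congr rfl fun i _ => ?_
      rw [Finset.mul_sum]
      refine Finset.sum_congr rfl fun j _ => ?_
      rw [hr _ (ht i), hr _ (ht j), hr _ (abs_nonneg _), sq_abs]
      ring
    rw [hgoal]
    linarith
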